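/- arXiv:2602.18629 — 2 statements merged into one kernel-verified Lean document; each statement's English description precedes it below -/
import Mathlib

section
/- For any z ∈ ℂ and θ ∈ ℝ, the Jacobi–Anger expansion holds: exp(i z sin θ) = ∑_{m ∈ ℤ} J_m(z) exp(i m θ), where J_m is the Bessel function of the first kind of integer order m, defined by its power series. -/
open Complex

/-- Bessel function of the first kind of nonnegative integer order, defined by
its power series. -/
noncomputable def besselJnat (m : ℕ) (z : ℂ) : ℂ :=
  ∑' j : ℕ, (-1 : ℂ) ^ j / ((j.factorial : ℂ) * ((j + m).factorial : ℂ)) * (z / 2) ^ (2 * j + m)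

/-- Bessel function of the first kind of integer order: `J_{-m} = (-1)^m J_m`. -/
noncomputable def besselJint (m : ℤ) (z : ℂ) : ℂ :=
  if 0 ≤ m then besselJnat m.toNat z else (-1 : ℂ) ^ (-m).toNat * besselJnat (-m).toNat z

/-- Reindexing `ℤ × ℕ ≃ ℕ × ℕ`, `(m, j) ↦ (p, q)` with `p - q = m`, `min p q = j`. -/
def pairEquiv : ℤ × ℕ ≃ ℕ × ℕ where
  toFun x := if 0 ≤ x.1 then (x.2 + x.1.toNat, x.2) else (x.2, x.2 + (-x.1).toNat)
  invFun y := ((y.1 : ℤ) - y.2, min y.1 y.2)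
  left_inv x := by
    obtain ⟨m, j⟩ := x
    by_cases h : 0 ≤ m <;> simp [h, Prod.ext_iff] <;> omega
  right_inv y := by
    obtain ⟨p, q⟩ := y
    by_cases h : q ≤ p
    · have : (0:ℤ) ≤ (p:ℤ) - q := by omega
      simp [this, h, Prod.ext_iff] <;> omega
    · have : ¬ (0:ℤ) ≤ (p:ℤ) - q := by omega
      simp [this, h, Prod.ext_iff]; omega

/-- The summand in the product of the two exponential series. -/
noncomputable def jaF (a w : ℂ) (pq : ℕ × ℕ) : ℂ :=
  (a * w) ^ pq.1 / (pq.1.factorial : ℂ) * ((-(a * w⁻¹)) ^ pq.2 / (pq.2.factorial : ℂ))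

theorem exp_tsum' (x : ℂ) : Complex.exp x = ∑' n : ℕ, x ^ n / n.factorial := by
  rw [Complex.exp_eq_exp_ℂ, NormedSpace.exp_eq_tsum_div]

theorem summable_norm_pow_div_factorial (x : ℂ) :
    Summable fun p : ℕ => ‖x ^ p / (p.factorial : ℂ)‖ := by
  simpa [norm_div, norm_pow] using Real.summable_pow_div_factorial ‖x‖

theorem jaF_summable (a w : ℂ) : Summable (jaF a w) := by
  have := summable_mul_of_summable_norm (summable_norm_pow_div_factorial (a * w))
    (summable_norm_pow_div_factorial (-(a * w⁻¹)))
  exact this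

set_option maxHeartbeats 1000000 in
/-- The Jacobi–Anger expansion: `exp(i z sin θ) = ∑_{m ∈ ℤ} J_m(z) exp(i m θ)`. -/
theorem jacobi_anger (z : ℂ) (θ : ℝ) :
    Complex.exp (Complex.I * z * Real.sin θ)
      = ∑' m : ℤ, besselJint m z * Complex.exp (Complex.I * m * θ) := by
  set a : ℂ := z / 2 with ha
  set w : ℂ := Complex.exp (Complex.I * θ) with hw
  have hw0 : w ≠ 0 := Complex.exp_ne_zero _
  have hwinv : w⁻¹ = Complex.exp (-(Complex.I * θ)) := by
    rw [hw, ← Complex.exp_neg]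
  -- step 1 : argument identity
  have h1 : Complex.I * z * Real.sin θ = a * w + (-(a * w⁻¹)) := by
    rw [hwinv, hw, ha, Complex.ofReal_sin, Complex.sin]
    have e1 : Complex.exp (-(θ:ℂ) * Complex.I) = Complex.exp (-(Complex.I * θ)) := by
      ring_nf
    have e2 : Complex.exp ((θ:ℂ) * Complex.I) = Complex.exp (Complex.I * θ) := by
      ring_nf
    rw [e1, e2]
    linear_combination (z * (Complex.exp (-(Complex.I * θ)) -
      Complex.exp (Complex.I * θ)) / 2) * Complex.I_sq
  -- step 2 : expand as a double series
  have h2 : Complex.exp (Complex.I * z * Real.sin θ) = ∑' pq : ℕ × ℕ, jaF a w pq := by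
    rw [h1, Complex.exp_add, exp_tsum' (a * w), exp_tsum' (-(a * w⁻¹))]
    exact tsum_mul_tsum_of_summable_norm (summable_norm_pow_div_factorial (a * w))
      (summable_norm_pow_div_factorial (-(a * w⁻¹)))
  have hsum' : Summable fun mj : ℤ × ℕ => jaF a w (pairEquiv mj) := by
    have := pairEquiv.summable_iff.mpr (jaF_summable a w)
    exact this
  rw [h2, ← Equiv.tsum_eq pairEquiv (jaF a w), Summable.tsum_prod' hsum' fun b => hsum'.prod_factor b]
  refine tsum_congr fun m => ?_
  have hwm : Complex.exp (Complex.I * m * θ) = w ^ m := by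
    rw [hw, ← Complex.exp_int_mul]
    congr 1
    ring
  rw [hwm]
  by_cases hm : 0 ≤ m
  · obtain ⟨n, rfl⟩ : ∃ n : ℕ, m = (n : ℤ) := ⟨m.toNat, (Int.toNat_of_nonneg hm).symm⟩
    rw [besselJint, if_pos hm, zpow_natCast]
    simp only [Int.toNat_natCast]
    rw [besselJnat, ← ha, ← tsum_mul_right]
    refine tsum_congr fun j => ?_
    have hpe : pairEquiv ((n : ℤ), j) = (j + n, j) := by
      simp [pairEquiv]
    rw [jaF, hpe]
    simp only
    have hcan : w ^ j * w⁻¹ ^ j = 1 := by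
      rw [inv_pow, mul_inv_cancel₀ (pow_ne_zero _ hw0)]
    rw [mul_pow, neg_pow, mul_pow, inv_pow]
    field_simp [hw0]
    ring
  · push_neg at hm
    obtain ⟨n, rfl⟩ : ∃ n : ℕ, m = -(n : ℤ) := ⟨(-m).toNat, by omega⟩
    rw [besselJint, if_neg (by omega)]
    simp only [neg_neg, Int.toNat_natCast]
    rw [zpow_neg, zpow_natCast, besselJnat, ← ha, mul_assoc, ← tsum_mul_right,
      ← tsum_mul_left]
    refine tsum_congr fun j => ?_
    have hpe : pairEquiv (-(n : ℤ), j) = (j, j + n) := by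
      have hn0 : ¬ ((0:ℤ) ≤ -(n:ℤ)) := by omega
      simp [pairEquiv, hn0]
    rw [jaF, hpe]
    simp only
    have hcan : w ^ j * w⁻¹ ^ j = 1 := by
      rw [inv_pow, mul_inv_cancel₀ (pow_ne_zero _ hw0)]
    rw [mul_pow, neg_pow, mul_pow, inv_pow]
    field_simp [hw0]
    ring
end

section
/- Minimization of the continuous interpolation-error functional: among positive measurable densities d on a measure space (Γ, μ) with ∫_Γ d dμ = 𝒩 fixed, the functional ∫_Γ h(x) d(x)^{−α} dμ (with h ≥ 0 measurable, α > 0) is minimized by d proportional to h^{1/(α+1)}, and the minimal value is 𝒩^{−α} (∫_Γ h^{1/(α+1)} dμ)^{α+1}. -/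
open MeasureTheory ENNReal

/-- Minimization of the continuous interpolation-error functional in
metric-based mesh adaptation: among positive densities `d` with
`∫ d dμ = 𝒩`, the functional `∫ h d^{−α} dμ` is bounded below by
`𝒩^{−α} (∫ h^{1/(α+1)} dμ)^{α+1}`, and this value is attained by the density
`d* = 𝒩 h^{1/(α+1)} / ∫ h^{1/(α+1)} dμ` (which has total mass `𝒩`). -/
theorem optimal_mesh_density {Γ : Type*} [MeasurableSpace Γ] (μ : Measure Γ)
    (h : Γ → ℝ≥0∞) (hh : Measurable h) (α : ℝ) (hα : 0 < α)
    (N : ℝ≥0∞) (hN0 : 0 < N) (hNtop : N ≠ ⊤)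
    (hfin0 : 0 < ∫⁻ x, (h x) ^ (1 / (α + 1)) ∂μ)
    (hfintop : (∫⁻ x, (h x) ^ (1 / (α + 1)) ∂μ) ≠ ⊤) :
    (∀ d : Γ → ℝ≥0∞, Measurable d → (∀ x, 0 < d x) → (∀ x, d x ≠ ⊤) →
      (∫⁻ x, d x ∂μ) = N →
      N ^ (-α) * (∫⁻ x, (h x) ^ (1 / (α + 1)) ∂μ) ^ (α + 1)
        ≤ ∫⁻ x, h x * (d x) ^ (-α) ∂μ) ∧
    ((∫⁻ x, N * (h x) ^ (1 / (α + 1)) / (∫⁻ y, (h y) ^ (1 / (α + 1)) ∂μ) ∂μ) = N ∧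
      (∫⁻ x, h x * (N * (h x) ^ (1 / (α + 1)) / (∫⁻ y, (h y) ^ (1 / (α + 1)) ∂μ)) ^ (-α) ∂μ)
        = N ^ (-α) * (∫⁻ x, (h x) ^ (1 / (α + 1)) ∂μ) ^ (α + 1)) := by
  set β : ℝ := 1 / (α + 1) with hβ
  set I : ℝ≥0∞ := ∫⁻ x, (h x) ^ β ∂μ with hI
  have hα1 : (0:ℝ) < α + 1 := by linarith
  have hβpos : 0 < β := by positivity
  have hI0 : I ≠ 0 := hfin0.ne'
  have hα0 : α ≠ 0 := hα.ne'
  have hα1' : α + 1 ≠ 0 := hα1.ne'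
  have hpq : Real.HolderConjugate (α + 1) ((α + 1) / α) := by
    constructor
    · rw [inv_one, inv_div]
      field_simp
      ring
    · linarith
    · positivity
  constructor
  · intro d hd hd0 hdtop hdN
    by_cases hA : (∫⁻ x, h x * (d x) ^ (-α) ∂μ) = ⊤
    · rw [hA]; exact le_top
    -- Hölder
    have key := ENNReal.lintegral_mul_le_Lp_mul_Lq μ hpq
      (f := fun x => (h x * (d x) ^ (-α)) ^ β) (g := fun x => (d x) ^ (α * β))
      ((hh.mul (hd.pow_const _)).pow_const _).aemeasurable
      ((hd.pow_const _)).aemeasurable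
    have hfg : ∀ x, ((h x * (d x) ^ (-α)) ^ β) * ((d x) ^ (α * β)) = (h x) ^ β := by
      intro x
      rw [ENNReal.mul_rpow_of_nonneg _ _ hβpos.le, ← ENNReal.rpow_mul, mul_assoc,
        ← ENNReal.rpow_add _ _ (hd0 x).ne' (hdtop x)]
      have : -α * β + α * β = 0 := by ring
      rw [this, ENNReal.rpow_zero, mul_one]
    have hfp : ∀ x, ((h x * (d x) ^ (-α)) ^ β) ^ (α + 1) = h x * (d x) ^ (-α) := by
      intro x
      rw [← ENNReal.rpow_mul]
      have : β * (α + 1) = 1 := by rw [hβ]; field_simp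
      rw [this, ENNReal.rpow_one]
    have hgq : ∀ x, ((d x) ^ (α * β)) ^ ((α + 1) / α) = d x := by
      intro x
      rw [← ENNReal.rpow_mul]
      have : α * β * ((α + 1) / α) = 1 := by rw [hβ]; field_simp
      rw [this, ENNReal.rpow_one]
    simp only [Pi.mul_apply] at key
    rw [lintegral_congr hfg] at key
    simp only [hfp, hgq] at key
    rw [hdN] at key
    -- key : I ≤ A ^ (1/(α+1)) * N ^ (1/((α+1)/α))
    have hNq : (1 : ℝ) / ((α + 1) / α) = α / (α + 1) := by field_simp
    rw [hNq] at key
    have key2 : I ^ (α + 1) ≤ (∫⁻ x, h x * (d x) ^ (-α) ∂μ) * N ^ α := by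
      calc I ^ (α + 1)
          ≤ ((∫⁻ x, h x * (d x) ^ (-α) ∂μ) ^ (1/(α+1)) * N ^ (α/(α+1))) ^ (α + 1) :=
            ENNReal.rpow_le_rpow key hα1.le
        _ = (∫⁻ x, h x * (d x) ^ (-α) ∂μ) * N ^ α := by
            rw [ENNReal.mul_rpow_of_nonneg _ _ hα1.le, ← ENNReal.rpow_mul, ← ENNReal.rpow_mul]
            have h1 : (1:ℝ)/(α+1) * (α+1) = 1 := by field_simp
            have h2 : α/(α+1) * (α+1) = α := by field_simp
            rw [h1, h2, ENNReal.rpow_one]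
    calc N ^ (-α) * I ^ (α + 1)
        ≤ N ^ (-α) * ((∫⁻ x, h x * (d x) ^ (-α) ∂μ) * N ^ α) :=
          mul_le_mul_right key2 _
      _ = (∫⁻ x, h x * (d x) ^ (-α) ∂μ) * (N ^ (-α) * N ^ α) := by ring
      _ = ∫⁻ x, h x * (d x) ^ (-α) ∂μ := by
          rw [← ENNReal.rpow_add _ _ hN0.ne' hNtop]
          simp
  · constructor
    · have : ∀ x, N * (h x) ^ β / I = (N / I) * (h x) ^ β := by
        intro x
        rw [div_eq_mul_inv, div_eq_mul_inv]
        ring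
      rw [lintegral_congr this, lintegral_const_mul _ (hh.pow_const _)]
      rw [← hI, div_eq_mul_inv, mul_assoc, ENNReal.inv_mul_cancel hI0 hfintop, mul_one]
    · have hae : ∀ᵐ x ∂μ, h x ≠ ⊤ := by
        have := ae_lt_top (hh.pow_const β) hfintop
        filter_upwards [this] with x hx
        intro hc
        rw [hc, ENNReal.top_rpow_of_pos hβpos] at hx
        exact (lt_irrefl _ hx)
      have heq : ∀ᵐ x ∂μ, h x * (N * (h x) ^ β / I) ^ (-α)
          = (N ^ (-α) * I ^ α) * (h x) ^ β := by
        filter_upwards [hae] with x hx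
        by_cases hx0 : h x = 0
        · rw [hx0, ENNReal.zero_rpow_of_pos hβpos, mul_zero, zero_mul, mul_zero]
        · have hhb0 : (h x) ^ β ≠ 0 := by
            simp [ENNReal.rpow_eq_zero_iff, hx0, hx, hβpos, hβpos.le, not_lt.mpr hβpos.le]
          have hhbt : (h x) ^ β ≠ ⊤ := ENNReal.rpow_ne_top_of_nonneg hβpos.le hx
          rw [div_eq_mul_inv,
            ENNReal.mul_rpow_of_ne_top (by
              exact ENNReal.mul_ne_top hNtop hhbt) (ENNReal.inv_ne_top.mpr hI0),
            ENNReal.mul_rpow_of_ne_top hNtop hhbt, ENNReal.inv_rpow, ← ENNReal.rpow_neg, neg_neg,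
            ← ENNReal.rpow_mul]
          have : h x * (N ^ (-α) * (h x) ^ (β * -α) * I ^ α)
              = N ^ (-α) * I ^ α * ((h x) ^ (1:ℝ) * (h x) ^ (β * -α)) := by
            rw [ENNReal.rpow_one]; ring
          rw [this, ← ENNReal.rpow_add _ _ hx0 hx]
          have hb : (1 : ℝ) + β * -α = β := by
            rw [hβ]; field_simp; ring
          rw [hb]
      rw [lintegral_congr_ae heq, lintegral_const_mul _ (hh.pow_const _), ← hI, mul_assoc]
      congr 1
      rw [← ENNReal.rpow_one I, ← ENNReal.rpow_mul, ← ENNReal.rpow_add _ _ hI0 hfintop]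
      norm_num
end
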